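/- Suppose Ω ≠ 0 and λ ≠ 0. Then for every ξ ∈ ℝ², the 4×4 Hermitian matrix H₊(ξ) has exactly four real eigenvalues, all simple, of the form −E₊(ξ) < −E₋(ξ) < 0 < E₋(ξ) < E₊(ξ), where E±(ξ) = √(Ω² + λ²/2 + |ξ|² ± √((4Ω² + λ²)|ξ|² + λ⁴/4)). -/

import Mathlib

open Complex Matrix Polynomial

/-- The Fourier-domain bulk Hamiltonian of gated twisted bilayer graphene with
AB stacking (valley `η = 1`). -/
noncomputable def Hplus (Ω lam : ℝ) (ξ : ℝ × ℝ) : Matrix (Fin 4) (Fin 4) ℂ :=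
  !![(Ω : ℂ), (ξ.1 : ℂ) - (ξ.2 : ℂ) * I, 0, 0;
     (ξ.1 : ℂ) + (ξ.2 : ℂ) * I, (Ω : ℂ), (lam : ℂ), 0;
     0, (lam : ℂ), -(Ω : ℂ), (ξ.1 : ℂ) - (ξ.2 : ℂ) * I;
     0, 0, (ξ.1 : ℂ) + (ξ.2 : ℂ) * I, -(Ω : ℂ)]

/-- A complex number is in the spectrum of a complex matrix iff it is a root of
its characteristic polynomial. -/
lemma Hplus.spectrum_iff_root {n : ℕ} (M : Matrix (Fin n) (Fin n) ℂ) (x : ℂ) :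
    x ∈ spectrum ℂ M ↔ M.charpoly.eval x = 0 := by
  rw [spectrum.mem_iff, Matrix.charpoly, eval_det, matPolyEquiv_charmatrix,
    eval_sub, eval_X, eval_C, Matrix.isUnit_iff_isUnit_det, isUnit_iff_ne_zero, not_not]
  rfl

/-- The characteristic polynomial of `H₊(ξ)`. -/
lemma Hplus.charpoly_eq (Ω lam : ℝ) (ξ : ℝ × ℝ) :
    (Hplus Ω lam ξ).charpoly
      = X^4 - C ((2*Ω^2 + lam^2 + 2*(ξ.1^2+ξ.2^2) : ℝ) : ℂ) * X^2
      + C ((((Ω^2 - (ξ.1^2+ξ.2^2))^2 + Ω^2*lam^2 : ℝ)) : ℂ) := by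
  set z : ℂ := (ξ.1:ℂ) + ξ.2*I with hz
  set w : ℂ := (ξ.1:ℂ) - ξ.2*I with hw
  have hzw : z * w = (((ξ.1^2+ξ.2^2 : ℝ)) : ℂ) := by
    rw [hz, hw]; push_cast; linear_combination (-(ξ.2:ℂ)^2) * I_sq
  have h : charmatrix (Hplus Ω lam ξ) =
      !![X - C (Ω:ℂ), -C w, 0, 0;
         -C z, X - C (Ω:ℂ), -C (lam:ℂ), 0;
         0, -C (lam:ℂ), X + C (Ω:ℂ), -C w;
         0, 0, -C z, X + C (Ω:ℂ)] := by
    apply Matrix.ext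
    intro i j
    fin_cases i <;> fin_cases j <;>
      simp [charmatrix_apply, Hplus, diagonal, Matrix.vecHead, Matrix.vecTail, hz, hw]
  have key : (Hplus Ω lam ξ).charpoly
      = X^4 - (2 * C (Ω:ℂ)^2 + C (lam:ℂ)^2 + 2 * (C z * C w)) * X^2
      + ((C (Ω:ℂ)^2 - C z * C w)^2 + C (Ω:ℂ)^2 * C (lam:ℂ)^2) := by
    rw [Matrix.charpoly, h]
    simp [Matrix.det_succ_row_zero, Fin.sum_univ_succ, Fin.succAbove]
    ring
  have e1 : ((2*Ω^2 + lam^2 + 2*(ξ.1^2+ξ.2^2) : ℝ) : ℂ)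
      = 2*(Ω:ℂ)^2 + (lam:ℂ)^2 + 2*(z*w) := by rw [hzw]; push_cast; ring
  have e2 : (((Ω^2 - (ξ.1^2+ξ.2^2))^2 + Ω^2*lam^2 : ℝ) : ℂ)
      = ((Ω:ℂ)^2 - z*w)^2 + (Ω:ℂ)^2*(lam:ℂ)^2 := by rw [hzw]; push_cast; ring
  rw [key, e1, e2]
  simp only [map_add, _root_.map_mul, map_pow, map_sub, map_ofNat]

/-- For `Ω ≠ 0`, `λ ≠ 0`, the matrix `H₊(ξ)` has exactly four real eigenvalues, all
simple (its characteristic polynomial splits into four distinct linear factors), of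
the form `−E₊(ξ) < −E₋(ξ) < 0 < E₋(ξ) < E₊(ξ)` with
`E±(ξ) = √(Ω² + λ²/2 + |ξ|² ± √((4Ω² + λ²)|ξ|² + λ⁴/4))`. -/
theorem Hplus_four_simple_eigenvalues (Ω lam : ℝ) (hΩ : Ω ≠ 0) (hlam : lam ≠ 0)
    (ξ : ℝ × ℝ) (Em Ep : ℝ)
    (hEm : Em = Real.sqrt (Ω ^ 2 + lam ^ 2 / 2 + (ξ.1 ^ 2 + ξ.2 ^ 2) -
      Real.sqrt ((4 * Ω ^ 2 + lam ^ 2) * (ξ.1 ^ 2 + ξ.2 ^ 2) + lam ^ 4 / 4)))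
    (hEp : Ep = Real.sqrt (Ω ^ 2 + lam ^ 2 / 2 + (ξ.1 ^ 2 + ξ.2 ^ 2) +
      Real.sqrt ((4 * Ω ^ 2 + lam ^ 2) * (ξ.1 ^ 2 + ξ.2 ^ 2) + lam ^ 4 / 4))) :
    spectrum ℂ (Hplus Ω lam ξ) = {(-Ep : ℂ), (-Em : ℂ), (Em : ℂ), (Ep : ℂ)} ∧
    (Hplus Ω lam ξ).charpoly =
      (X - C (-Ep : ℂ)) * (X - C (-Em : ℂ)) * (X - C (Em : ℂ)) * (X - C (Ep : ℂ)) ∧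
    0 < Em ∧ Em < Ep := by
  set r : ℝ := ξ.1 ^ 2 + ξ.2 ^ 2 with hr_def
  have hr : 0 ≤ r := by positivity
  set s : ℝ := Real.sqrt ((4 * Ω ^ 2 + lam ^ 2) * r + lam ^ 4 / 4) with hs_def
  have hsarg : 0 < (4 * Ω ^ 2 + lam ^ 2) * r + lam ^ 4 / 4 := by positivity
  have hs2 : s ^ 2 = (4 * Ω ^ 2 + lam ^ 2) * r + lam ^ 4 / 4 :=
    Real.sq_sqrt hsarg.le
  have hspos : 0 < s := Real.sqrt_pos.2 hsarg
  have ha : 0 < Ω ^ 2 + lam ^ 2 / 2 + r := by positivity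
  have hs2lt : s ^ 2 < (Ω ^ 2 + lam ^ 2 / 2 + r) ^ 2 := by
    rw [hs2]
    have h1 : 0 < Ω ^ 2 * lam ^ 2 := by positivity
    nlinarith [sq_nonneg (Ω ^ 2 - r)]
  have hsa : s < Ω ^ 2 + lam ^ 2 / 2 + r :=
    lt_of_pow_lt_pow_left₀ 2 ha.le hs2lt
  have hEm2 : Em ^ 2 = Ω ^ 2 + lam ^ 2 / 2 + r - s := by
    rw [hEm]; exact Real.sq_sqrt (by linarith)
  have hEp2 : Ep ^ 2 = Ω ^ 2 + lam ^ 2 / 2 + r + s := by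
    rw [hEp]; exact Real.sq_sqrt (by linarith)
  have hEmpos : 0 < Em := by
    rw [hEm]; exact Real.sqrt_pos.2 (by linarith)
  have hEppos : 0 < Ep := by
    rw [hEp]; exact Real.sqrt_pos.2 (by linarith)
  have hEmEp : Em < Ep := by
    refine lt_of_pow_lt_pow_left₀ 2 hEppos.le ?_
    rw [hEm2, hEp2]; linarith
  have h1 : (2 * Ω ^ 2 + lam ^ 2 + 2 * (ξ.1 ^ 2 + ξ.2 ^ 2) : ℝ) = Em ^ 2 + Ep ^ 2 := by
    rw [hEm2, hEp2, hr_def]; ring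
  have h0 : ((Ω ^ 2 - (ξ.1 ^ 2 + ξ.2 ^ 2)) ^ 2 + Ω ^ 2 * lam ^ 2 : ℝ)
      = Em ^ 2 * Ep ^ 2 := by
    rw [hEm2, hEp2]
    have : (Ω ^ 2 + lam ^ 2 / 2 + r - s) * (Ω ^ 2 + lam ^ 2 / 2 + r + s)
        = (Ω ^ 2 + lam ^ 2 / 2 + r) ^ 2 - s ^ 2 := by ring
    rw [this, hs2, hr_def]; ring
  have hchar : (Hplus Ω lam ξ).charpoly =
      (X - C (-Ep : ℂ)) * (X - C (-Em : ℂ)) * (X - C (Em : ℂ)) * (X - C (Ep : ℂ)) := by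
    rw [Hplus.charpoly_eq, h1, h0]
    push_cast
    simp only [map_add, _root_.map_mul, map_pow, map_neg]
    ring
  refine ⟨?_, hchar, hEmpos, hEmEp⟩
  ext x
  rw [Hplus.spectrum_iff_root, hchar]
  simp only [eval_mul, eval_sub, eval_X, eval_C, mul_eq_zero, sub_eq_zero,
    Set.mem_insert_iff, Set.mem_singleton_iff]
  simp only [or_assoc]
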